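/- (Gessel's theorem, finite-variable form.) Let p, q, n ≥ 1 be integers and let x ∈ ℝ^p, y ∈ ℝ^q satisfy |x_i| < 1 for all i and |y_j| < 1 for all j. For i ∈ ℤ set A_i := ∑_{ℓ=0}^∞ h_{ℓ+i}(x)·h_ℓ(y) (the series converges absolutely). Then the family ( s_λ(x)·s_λ(y) ), indexed by partitions λ of length at most n, is absolutely summable, and ∑_{λ : ℓ(λ) ≤ n} s_λ(x)·s_λ(y) = det( (A_{i−j})_{1≤i,j≤n} ). -/

import Mathlib

open scoped BigOperators

noncomputable def hpoly {p : ℕ} (x : Fin p → ℝ) (r : ℤ) : ℝ :=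
  if 0 ≤ r then ∑ d ∈ Finset.Nat.antidiagonalTuple p r.toNat, ∏ i, x i ^ d i
  else 0

noncomputable def gP (k : ℕ) (t : ℝ) (r : ℤ) : ℝ :=
  if 0 ≤ r then ((r.toNat + 1 : ℕ) : ℝ) ^ k * t ^ r.toNat else 0

lemma gP_nonneg {k : ℕ} {t : ℝ} (ht : 0 ≤ t) (r : ℤ) : 0 ≤ gP k t r := by
  unfold gP; split
  · positivity
  · exact le_rfl

lemma hpoly_neg {p : ℕ} (x : Fin p → ℝ) {r : ℤ} (hr : r < 0) : hpoly x r = 0 := by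
  unfold hpoly; rw [if_neg (not_le.mpr hr)]

lemma card_antidiagonalTuple_le (p N : ℕ) :
    (Finset.Nat.antidiagonalTuple p N).card ≤ (N + 1) ^ p := by
  have : (Finset.Nat.antidiagonalTuple p N).card ≤
      (Finset.univ : Finset (Fin p → Fin (N + 1))).card := by
    apply Finset.card_le_card_of_injOn (fun d i => (Fin.ofNat (N + 1) (d i)))
    · intro d _; exact Finset.mem_univ _
    · intro d hd e he h
      rw [Finset.mem_coe, Finset.Nat.mem_antidiagonalTuple] at hd he
      funext i
      have hdi : d i ≤ N := hd ▸ Finset.single_le_sum (f := d) (fun _ _ => Nat.zero_le _)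
        (Finset.mem_univ i)
      have hei : e i ≤ N := he ▸ Finset.single_le_sum (f := e) (fun _ _ => Nat.zero_le _)
        (Finset.mem_univ i)
      have h2 := congrArg Fin.val (congrFun h i)
      simp only [Fin.val_ofNat] at h2
      rwa [Nat.mod_eq_of_lt (by omega), Nat.mod_eq_of_lt (by omega)] at h2
  simpa using this

lemma abs_hpoly_le {p : ℕ} (x : Fin p → ℝ) {t : ℝ} (ht0 : 0 ≤ t)
    (htx : ∀ i, |x i| ≤ t) (r : ℤ) : |hpoly x r| ≤ gP p t r := by
  unfold hpoly gP
  split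
  · set N := r.toNat
    calc |∑ d ∈ Finset.Nat.antidiagonalTuple p N, ∏ i, x i ^ d i|
        ≤ ∑ d ∈ Finset.Nat.antidiagonalTuple p N, |∏ i, x i ^ d i| :=
          Finset.abs_sum_le_sum_abs _ _
      _ ≤ ∑ d ∈ Finset.Nat.antidiagonalTuple p N, t ^ N := by
          apply Finset.sum_le_sum
          intro d hd
          rw [Finset.Nat.mem_antidiagonalTuple] at hd
          rw [Finset.abs_prod]
          calc ∏ i, |x i ^ d i| ≤ ∏ i, t ^ d i := by
                apply Finset.prod_le_prod (fun _ _ => abs_nonneg _)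
                intro i _
                rw [abs_pow]
                exact pow_le_pow_left₀ (abs_nonneg _) (htx i) _
            _ = t ^ N := by rw [Finset.prod_pow_eq_pow_sum, hd]
      _ = (Finset.Nat.antidiagonalTuple p N).card * t ^ N := by
          rw [Finset.sum_const, nsmul_eq_mul]
      _ ≤ ((N + 1 : ℕ) : ℝ) ^ p * t ^ N := by
          apply mul_le_mul_of_nonneg_right _ (pow_nonneg ht0 _)
          rw [← Nat.cast_pow]
          exact_mod_cast card_antidiagonalTuple_le p N
  · simp

lemma summable_gP {k : ℕ} {t : ℝ} (ht0 : 0 < t) (ht1 : t < 1) : Summable (gP k t) := by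
  apply Summable.of_nat_of_neg_add_one
  · have h1 : Summable (fun n : ℕ => ((n : ℝ)) ^ k * t ^ n) := by
      simpa using summable_pow_mul_geometric_of_norm_lt_one (R := ℝ) k
        (by rwa [Real.norm_eq_abs, abs_of_pos ht0])
    have h2 : Summable (fun n : ℕ => ((n : ℝ) + 1) ^ k * t ^ (n + 1)) := by
      have hinj : Function.Injective (fun n : ℕ => n + 1) := fun a b hab => by simpa using hab
      refine (h1.comp_injective hinj).congr fun n => ?_
      simp only [Function.comp]
      push_cast
      ring
    have h3 : Summable (fun n : ℕ => ((n : ℝ) + 1) ^ k * t ^ n) := by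
      refine (h2.mul_right t⁻¹).congr fun n => ?_
      rw [pow_succ]
      field_simp
    refine h3.congr fun n => ?_
    simp only [gP, Int.toNat_natCast, if_pos (Int.natCast_nonneg n)]
    push_cast
    ring
  · apply summable_zero.congr
    intro n
    simp only [gP]
    rw [if_neg (by omega)]

lemma summable_gP_shift {k : ℕ} {t : ℝ} (ht0 : 0 < t) (ht1 : t < 1) (a : ℤ) :
    Summable (fun m : ℤ => gP k t (m + a)) :=
  (summable_gP ht0 ht1).comp_injective (add_left_injective a)

lemma pi_summable_tsum : ∀ (n : ℕ) (g : Fin n → ℤ → ℝ),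
    (∀ i, Summable fun m => |g i m|) →
    Summable (fun m : Fin n → ℤ => |∏ i, g i (m i)|) ∧
    (∑' m : Fin n → ℤ, ∏ i, g i (m i)) = ∏ i, ∑' m, g i m := by
  intro n
  induction n with
  | zero =>
    intro g _
    constructor
    · exact Summable.of_finite
    · rw [tsum_eq_single (default : Fin 0 → ℤ)
        (fun b hb => absurd (Subsingleton.elim b default) hb)]
      simp
  | succ n ih =>
    intro g hg
    obtain ⟨ih1, ih2⟩ := ih (fun i => g i.succ) (fun i => hg i.succ)
    set F' : (Fin n → ℤ) → ℝ := fun b => ∏ i, g i.succ (b i) with hF'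
    have h0 : Summable fun m : ℤ => ‖g 0 m‖ := by simpa [Real.norm_eq_abs] using hg 0
    have hF'n : Summable fun b => ‖F' b‖ := by simpa [Real.norm_eq_abs] using ih1
    have hmul : Summable fun z : ℤ × (Fin n → ℤ) => ‖g 0 z.1 * F' z.2‖ := h0.mul_norm hF'n
    set e : ℤ × (Fin n → ℤ) ≃ (Fin (n+1) → ℤ) := Fin.consEquiv (fun _ => ℤ) with he
    have hcomp : ∀ z : ℤ × (Fin n → ℤ), (∏ i, g i (e z i)) = g 0 z.1 * F' z.2 := by
      intro z
      rw [Fin.prod_univ_succ]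
      simp [he, Fin.consEquiv, hF']
    constructor
    · refine e.summable_iff.mp (hmul.congr fun z => ?_)
      rw [Real.norm_eq_abs, ← hcomp z]
      rfl
    · calc ∑' m : Fin (n+1) → ℤ, ∏ i, g i (m i)
          = ∑' z : ℤ × (Fin n → ℤ), ∏ i, g i (e z i) :=
            (e.tsum_eq (fun m => ∏ i, g i (m i))).symm
        _ = ∑' z : ℤ × (Fin n → ℤ), g 0 z.1 * F' z.2 := tsum_congr hcomp
        _ = (∑' a, g 0 a) * (∑' b, F' b) := (tsum_mul_tsum_of_summable_norm h0 hF'n).symm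
        _ = ∏ i : Fin (n+1), ∑' m, g i m := by
            rw [Fin.prod_univ_succ, ih2]

lemma antitone_aux {n : ℕ} {f : Fin n → ℤ} (hf : StrictAnti f) :
    Antitone (fun i : Fin n => f i + ((i : ℕ) : ℤ)) := by
  cases n with
  | zero => intro a _ _; exact a.elim0
  | succ m =>
    rw [Fin.antitone_iff_succ_le]
    intro i
    have h1 : f i.succ < f i.castSucc := hf (Fin.castSucc_lt_succ (i := i))
    have h2 : ((i.succ : Fin (m+1)) : ℕ) = ((i.castSucc : Fin (m+1)) : ℕ) + 1 := by simp
    omega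

lemma strictAnti_sub {n : ℕ} {f : Fin n → ℕ} (hf : Antitone f) :
    StrictAnti (fun i : Fin n => ((f i : ℤ)) - ((i : ℕ) : ℤ)) := by
  intro a b hab
  have h1 : f b ≤ f a := hf hab.le
  have h2 : (a : ℕ) < (b : ℕ) := hab
  show ((f b : ℤ)) - ((b : ℕ) : ℤ) < ((f a : ℤ)) - ((a : ℕ) : ℤ)
  omega

lemma strictAnti_eq_of_range_eq {n : ℕ} {f g : Fin n → ℤ} (hf : StrictAnti f)
    (hg : StrictAnti g) (h : Set.range f = Set.range g) : f = g :=
  Set.range_injOn_strictAnti hf hg h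

noncomputable def schur {p n : ℕ} (lam : Fin n → ℕ) (x : Fin p → ℝ) : ℝ :=
  Matrix.det (Matrix.of fun i j : Fin n =>
    hpoly x ((lam i : ℤ) - ((i : ℕ) : ℤ) + ((j : ℕ) : ℤ)))

theorem gessel_theorem (p q n : ℕ) (hp : 1 ≤ p) (hq : 1 ≤ q) (hn : 1 ≤ n)
    (x : Fin p → ℝ) (y : Fin q → ℝ)
    (hx : ∀ i, |x i| < 1) (hy : ∀ j, |y j| < 1) :
    Summable (fun lam : {f : Fin n → ℕ // Antitone f} =>
      schur lam.1 x * schur lam.1 y) ∧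
    ∑' lam : {f : Fin n → ℕ // Antitone f}, schur lam.1 x * schur lam.1 y =
      Matrix.det (Matrix.of fun i j : Fin n =>
        ∑' ℓ : ℕ, hpoly x ((ℓ : ℤ) + (((i : ℕ) : ℤ) - ((j : ℕ) : ℤ))) *
          hpoly y (ℓ : ℤ)) := by
  classical
  obtain ⟨t, ht0, ht1, htx⟩ : ∃ t : ℝ, 0 < t ∧ t < 1 ∧ ∀ i, |x i| ≤ t := by
    refine ⟨max (1/2) (Finset.univ.sup' (Finset.univ_nonempty_iff.mpr
      ⟨⟨0, hp⟩⟩) fun i => |x i|), by positivity, ?_, ?_⟩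
    · rw [max_lt_iff]
      refine ⟨by norm_num, ?_⟩
      rw [Finset.sup'_lt_iff]
      exact fun i _ => hx i
    · intro i
      exact le_max_of_le_right (Finset.le_sup' (f := fun i => |x i|) (Finset.mem_univ i))
  obtain ⟨s, hs0, hs1, hsy⟩ : ∃ s : ℝ, 0 < s ∧ s < 1 ∧ ∀ j, |y j| ≤ s := by
    refine ⟨max (1/2) (Finset.univ.sup' (Finset.univ_nonempty_iff.mpr
      ⟨⟨0, hq⟩⟩) fun j => |y j|), by positivity, ?_, ?_⟩
    · rw [max_lt_iff]
      refine ⟨by norm_num, ?_⟩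
      rw [Finset.sup'_lt_iff]
      exact fun j _ => hy j
    · intro j
      exact le_max_of_le_right (Finset.le_sup' (f := fun j => |y j|) (Finset.mem_univ j))
  -- uniform bound on gP p t
  have hgpx : Summable (gP p t) := summable_gP ht0 ht1
  set Cx : ℝ := ∑' r : ℤ, gP p t r with hCxdef
  have hCx : ∀ r, gP p t r ≤ Cx := fun r =>
    hgpx.le_tsum r (fun j _ => gP_nonneg ht0.le j)
  -- W majorant
  set Wx : ℤ → ℝ := fun r => ∑ i : Fin n, gP p t (r + ((i : ℕ) : ℤ)) with hWxdef
  set Wy : ℤ → ℝ := fun r => ∑ i : Fin n, gP q s (r + ((i : ℕ) : ℤ)) with hWydef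
  set W : ℤ → ℝ := fun r => Wx r * Wy r with hWdef
  have hWxnn : ∀ r, 0 ≤ Wx r := fun r =>
    Finset.sum_nonneg fun i _ => gP_nonneg ht0.le _
  have hWynn : ∀ r, 0 ≤ Wy r := fun r =>
    Finset.sum_nonneg fun i _ => gP_nonneg hs0.le _
  have hWnn : ∀ r, 0 ≤ W r := fun r => mul_nonneg (hWxnn r) (hWynn r)
  have hWsum : Summable W := by
    have h1 : ∀ z : Fin n × Fin n,
        Summable (fun r : ℤ => gP p t (r + ((z.1 : ℕ) : ℤ)) * gP q s (r + ((z.2 : ℕ) : ℤ))) := by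
      intro z
      refine Summable.of_nonneg_of_le
        (fun r => mul_nonneg (gP_nonneg ht0.le _) (gP_nonneg hs0.le _))
        (fun r => ?_) (((summable_gP_shift (k := q) hs0 hs1 ((z.2 : ℕ) : ℤ))).mul_left Cx)
      exact mul_le_mul_of_nonneg_right (hCx _) (gP_nonneg hs0.le _)
    refine (summable_sum (s := (Finset.univ : Finset (Fin n × Fin n)))
      (fun z _ => h1 z)).congr fun r => ?_
    rw [hWdef]
    simp only [hWxdef, hWydef]
    rw [Finset.sum_mul_sum]
    rw [← Finset.sum_product']
    rw [Finset.univ_product_univ]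
  -- pointwise bound
  have hbound : ∀ (a b : Fin n) (m : ℤ),
      |hpoly x (m + ((a : ℕ) : ℤ)) * hpoly y (m + ((b : ℕ) : ℤ))| ≤ W m := by
    intro a b m
    rw [abs_mul]
    have h1 : |hpoly x (m + ((a : ℕ) : ℤ))| ≤ Wx m := by
      refine (abs_hpoly_le x ht0.le htx _).trans ?_
      exact Finset.single_le_sum (f := fun i : Fin n => gP p t (m + ((i : ℕ) : ℤ)))
        (fun i _ => gP_nonneg ht0.le _) (Finset.mem_univ a)
    have h2 : |hpoly y (m + ((b : ℕ) : ℤ))| ≤ Wy m := by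
      refine (abs_hpoly_le y hs0.le hsy _).trans ?_
      exact Finset.single_le_sum (f := fun i : Fin n => gP q s (m + ((i : ℕ) : ℤ)))
        (fun i _ => gP_nonneg hs0.le _) (Finset.mem_univ b)
    exact mul_le_mul h1 h2 (abs_nonneg _) (hWxnn m)
  have hgsum : ∀ a b : Fin n, Summable fun m : ℤ =>
      |hpoly x (m + ((a : ℕ) : ℤ)) * hpoly y (m + ((b : ℕ) : ℤ))| :=
    fun a b => Summable.of_nonneg_of_le (fun _ => abs_nonneg _) (hbound a b) hWsum
  -- master pi summability
  have hWabs : ∀ i : Fin n, Summable fun m : ℤ => |W m| :=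
    fun _ => hWsum.congr fun r => (abs_of_nonneg (hWnn r)).symm
  have hWpi : Summable (fun m : Fin n → ℤ => ∏ i, W (m i)) := by
    refine ((pi_summable_tsum n (fun _ => W) hWabs).1).congr fun m => ?_
    exact abs_of_nonneg (Finset.prod_nonneg fun i _ => hWnn _)
  -- determinant functions
  set detX : (Fin n → ℤ) → ℝ := fun m =>
    Matrix.det (Matrix.of fun i j : Fin n => hpoly x (m j + ((i : ℕ) : ℤ))) with hdetXdef
  set detY : (Fin n → ℤ) → ℝ := fun m =>
    Matrix.det (Matrix.of fun i j : Fin n => hpoly y (m j + ((i : ℕ) : ℤ))) with hdetYdef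
  set T : (Fin n → ℤ) → ℝ := fun m =>
    (∏ i, hpoly y (m i + ((i : ℕ) : ℤ))) * detX m with hTdef
  have hsmul : ∀ (σ : Equiv.Perm (Fin n)) (r : ℝ),
      |Equiv.Perm.sign σ • r| = |r| := by
    intro σ r
    rcases Int.units_eq_one_or (Equiv.Perm.sign σ) with h | h <;> simp [h, Units.smul_def]
  have hTb : ∀ m : Fin n → ℤ, |T m| ≤ (n.factorial : ℝ) * ∏ i, W (m i) := by
    intro m
    have hd : |detX m| ≤ ∑ σ : Equiv.Perm (Fin n),
        ∏ i, |hpoly x (m i + ((σ i : ℕ) : ℤ))| := by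
      simp only [hdetXdef]
      rw [Matrix.det_apply]
      refine (Finset.abs_sum_le_sum_abs _ _).trans (le_of_eq ?_)
      refine Finset.sum_congr rfl fun σ _ => ?_
      rw [hsmul, Finset.abs_prod]
      simp only [Matrix.of_apply]
    calc |T m| = (∏ i, |hpoly y (m i + ((i : ℕ) : ℤ))|) * |detX m| := by
          simp only [hTdef]
          rw [abs_mul, Finset.abs_prod]
      _ ≤ (∏ i, |hpoly y (m i + ((i : ℕ) : ℤ))|) *
          ∑ σ : Equiv.Perm (Fin n), ∏ i, |hpoly x (m i + ((σ i : ℕ) : ℤ))| :=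
          mul_le_mul_of_nonneg_left hd (Finset.prod_nonneg fun i _ => abs_nonneg _)
      _ = ∑ σ : Equiv.Perm (Fin n),
          ∏ i, (|hpoly x (m i + ((σ i : ℕ) : ℤ))| * |hpoly y (m i + ((i : ℕ) : ℤ))|) := by
          rw [Finset.mul_sum]
          refine Finset.sum_congr rfl fun σ _ => ?_
          rw [← Finset.prod_mul_distrib]
          exact Finset.prod_congr rfl fun i _ => (mul_comm _ _)
      _ ≤ ∑ σ : Equiv.Perm (Fin n), ∏ i, W (m i) := by
          refine Finset.sum_le_sum fun σ _ => ?_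
          refine Finset.prod_le_prod
            (fun i _ => mul_nonneg (abs_nonneg _) (abs_nonneg _)) fun i _ => ?_
          rw [← abs_mul]
          exact hbound (σ i) i (m i)
      _ = (n.factorial : ℝ) * ∏ i, W (m i) := by
          rw [Finset.sum_const, Finset.card_univ, Fintype.card_perm,
            Fintype.card_fin, nsmul_eq_mul]
  have hTsum : Summable T := summable_abs_iff.mp
    (Summable.of_nonneg_of_le (fun _ => abs_nonneg _) hTb (hWpi.mul_left _))
  have hEntry : ∀ i j : Fin n,
      (∑' ℓ : ℕ, hpoly x ((ℓ : ℤ) + (((i : ℕ) : ℤ) - ((j : ℕ) : ℤ))) * hpoly y (ℓ : ℤ))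
      = ∑' m : ℤ, hpoly x (m + ((i : ℕ) : ℤ)) * hpoly y (m + ((j : ℕ) : ℤ)) := by
    intro i j
    have hinj : Function.Injective (fun ℓ : ℕ => (ℓ : ℤ) - ((j : ℕ) : ℤ)) := by
      intro a b hab
      simp only [sub_left_inj, Nat.cast_inj] at hab
      exact hab
    have hsupp : Function.support
        (fun m : ℤ => hpoly x (m + ((i : ℕ) : ℤ)) * hpoly y (m + ((j : ℕ) : ℤ)))
        ⊆ Set.range (fun ℓ : ℕ => (ℓ : ℤ) - ((j : ℕ) : ℤ)) := by
      intro m hm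
      rcases lt_or_ge (m + ((j : ℕ) : ℤ)) 0 with h | h
      · exact absurd (show hpoly x (m + ((i : ℕ) : ℤ)) * hpoly y (m + ((j : ℕ) : ℤ)) = 0 by
          rw [hpoly_neg y h, mul_zero]) hm
      · exact ⟨(m + ((j : ℕ) : ℤ)).toNat, by
          show (((m + ((j : ℕ) : ℤ)).toNat : ℤ)) - ((j : ℕ) : ℤ) = m
          rw [Int.toNat_of_nonneg h]
          ring⟩
    rw [← hinj.tsum_eq hsupp]
    refine tsum_congr fun ℓ => ?_
    show hpoly x ((ℓ : ℤ) + (((i : ℕ) : ℤ) - ((j : ℕ) : ℤ))) * hpoly y (ℓ : ℤ)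
      = hpoly x (((ℓ : ℤ) - ((j : ℕ) : ℤ)) + ((i : ℕ) : ℤ)) *
        hpoly y (((ℓ : ℤ) - ((j : ℕ) : ℤ)) + ((j : ℕ) : ℤ))
    congr 1
    · congr 1
      ring
    · congr 1
      ring
  have hmain1 : Matrix.det (Matrix.of fun i j : Fin n =>
      ∑' m : ℤ, hpoly x (m + ((i : ℕ) : ℤ)) * hpoly y (m + ((j : ℕ) : ℤ)))
      = ∑' m : Fin n → ℤ, T m := by
    have hstep1 : ∀ σ : Equiv.Perm (Fin n),
        (∏ i, ∑' m : ℤ, hpoly x (m + ((σ i : ℕ) : ℤ)) * hpoly y (m + ((i : ℕ) : ℤ)))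
        = ∑' m : Fin n → ℤ,
            ∏ i, (hpoly x (m i + ((σ i : ℕ) : ℤ)) * hpoly y (m i + ((i : ℕ) : ℤ))) :=
      fun σ => ((pi_summable_tsum n
        (fun i => fun m => hpoly x (m + ((σ i : ℕ) : ℤ)) * hpoly y (m + ((i : ℕ) : ℤ)))
        (fun i => hgsum (σ i) i)).2).symm
    have hsummand : ∀ σ : Equiv.Perm (Fin n), Summable (fun m : Fin n → ℤ =>
        ∏ i, (hpoly x (m i + ((σ i : ℕ) : ℤ)) * hpoly y (m i + ((i : ℕ) : ℤ)))) :=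
      fun σ => summable_abs_iff.mp ((pi_summable_tsum n _ (fun i => hgsum (σ i) i)).1)
    rw [Matrix.det_apply]
    simp only [Units.smul_def, zsmul_eq_mul, Matrix.of_apply]
    have h2 : ∀ σ : Equiv.Perm (Fin n), ((Equiv.Perm.sign σ : ℤ) : ℝ) *
        (∏ i, ∑' m : ℤ, hpoly x (m + ((σ i : ℕ) : ℤ)) * hpoly y (m + ((i : ℕ) : ℤ)))
        = ∑' m : Fin n → ℤ, ((Equiv.Perm.sign σ : ℤ) : ℝ) *
            ∏ i, (hpoly x (m i + ((σ i : ℕ) : ℤ)) * hpoly y (m i + ((i : ℕ) : ℤ))) := by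
      intro σ
      rw [hstep1 σ, tsum_mul_left]
    rw [Finset.sum_congr rfl fun σ _ => h2 σ]
    rw [← Summable.tsum_finsetSum (fun σ _ => (hsummand σ).mul_left _)]
    refine tsum_congr fun m => ?_
    have hsplit : ∀ σ : Equiv.Perm (Fin n),
        ∏ i, (hpoly x (m i + ((σ i : ℕ) : ℤ)) * hpoly y (m i + ((i : ℕ) : ℤ)))
        = (∏ i, hpoly x (m i + ((σ i : ℕ) : ℤ))) * ∏ i, hpoly y (m i + ((i : ℕ) : ℤ)) :=
      fun σ => Finset.prod_mul_distrib
    calc ∑ σ : Equiv.Perm (Fin n), ((Equiv.Perm.sign σ : ℤ) : ℝ) *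
            ∏ i, (hpoly x (m i + ((σ i : ℕ) : ℤ)) * hpoly y (m i + ((i : ℕ) : ℤ)))
        = (∑ σ : Equiv.Perm (Fin n), ((Equiv.Perm.sign σ : ℤ) : ℝ) *
            ∏ i, hpoly x (m i + ((σ i : ℕ) : ℤ))) * ∏ i, hpoly y (m i + ((i : ℕ) : ℤ)) := by
          rw [Finset.sum_mul]
          refine Finset.sum_congr rfl fun σ _ => ?_
          rw [hsplit σ]
          ring
      _ = detX m * ∏ i, hpoly y (m i + ((i : ℕ) : ℤ)) := by
          congr 1
          simp only [hdetXdef]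
          rw [Matrix.det_apply]
          simp only [Units.smul_def, zsmul_eq_mul, Matrix.of_apply]
      _ = T m := by
          simp only [hTdef]
          ring
  -- the symmetrization
  have hdetX0 : ∀ m : Fin n → ℤ, ¬ Function.Injective m → detX m = 0 := by
    intro m hm
    rw [Function.not_injective_iff] at hm
    obtain ⟨a, b, hab, hne⟩ := hm
    simp only [hdetXdef]
    rw [← Matrix.det_transpose]
    apply Matrix.det_zero_of_row_eq hne
    funext j
    simp only [Matrix.transpose_apply, Matrix.of_apply, hab]
  have hΦinj : Function.Injective (fun z : {f : Fin n → ℤ // StrictAnti f} × Equiv.Perm (Fin n)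
      => (z.1.1 ∘ z.2 : Fin n → ℤ)) := by
    rintro ⟨⟨m₀, hm₀⟩, σ⟩ ⟨⟨m₁, hm₁⟩, τ⟩ h
    simp only [] at h
    have hr : Set.range m₀ = Set.range m₁ := by
      have h0 : Set.range (m₀ ∘ σ) = Set.range m₀ := σ.surjective.range_comp m₀
      have h1 : Set.range (m₁ ∘ τ) = Set.range m₁ := τ.surjective.range_comp m₁
      rw [← h0, ← h1, h]
    have hm : m₀ = m₁ := strictAnti_eq_of_range_eq hm₀ hm₁ hr
    subst hm
    have hσ : σ = τ := by
      ext i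
      exact congrArg Fin.val (hm₀.injective (congrFun h i))
    subst hσ
    rfl
  have hTsupp : Function.support T ⊆ Set.range
      (fun z : {f : Fin n → ℤ // StrictAnti f} × Equiv.Perm (Fin n)
      => (z.1.1 ∘ z.2 : Fin n → ℤ)) := by
    intro m hm
    have hminj : Function.Injective m := by
      by_contra hni
      refine hm ?_
      show (∏ i, hpoly y (m i + ((i : ℕ) : ℤ))) * detX m = 0
      rw [hdetX0 m hni, mul_zero]
    have hcard : (Finset.image m Finset.univ).card = n := by
      rw [Finset.card_image_of_injective _ hminj, Finset.card_univ, Fintype.card_fin]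
    set iso := (Finset.image m Finset.univ).orderIsoOfFin hcard with hiso
    set m₀ : Fin n → ℤ := fun i => (iso i.rev : ℤ) with hm₀
    have hm₀anti : StrictAnti m₀ := by
      intro a b hab
      have h1 : b.rev < a.rev := by rwa [Fin.rev_lt_rev]
      have h2 : iso b.rev < iso a.rev := iso.strictMono h1
      exact_mod_cast h2
    have hmem : ∀ i, m i ∈ Finset.image m Finset.univ :=
      fun i => Finset.mem_image_of_mem m (Finset.mem_univ i)
    set σfun : Fin n → Fin n := fun i => (iso.symm ⟨m i, hmem i⟩).rev with hσfun
    have hσinj : Function.Injective σfun := by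
      intro a b hab
      simp only [hσfun] at hab
      have h3 := congrArg iso (Fin.rev_injective hab)
      simp only [OrderIso.apply_symm_apply, Subtype.mk.injEq] at h3
      exact hminj h3
    refine ⟨⟨⟨m₀, hm₀anti⟩, Equiv.ofBijective σfun
      (Finite.injective_iff_bijective.mp hσinj)⟩, ?_⟩
    funext i
    show m₀ (σfun i) = m i
    simp only [hm₀, hσfun, Fin.rev_rev]
    rw [OrderIso.apply_symm_apply]
  have hInner : ∀ m₀ : Fin n → ℤ,
      ∑ σ : Equiv.Perm (Fin n), T (m₀ ∘ σ) = detX m₀ * detY m₀ := by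
    intro m₀
    have hperm : ∀ σ : Equiv.Perm (Fin n), detX (m₀ ∘ σ) =
        ((Equiv.Perm.sign σ : ℤ) : ℝ) * detX m₀ := by
      intro σ
      simp only [hdetXdef]
      have hsub : (Matrix.of fun i j : Fin n => hpoly x ((m₀ ∘ σ) j + ((i : ℕ) : ℤ)))
          = (Matrix.of fun i j : Fin n => hpoly x (m₀ j + ((i : ℕ) : ℤ))).submatrix id σ := rfl
      rw [hsub, Matrix.det_permute' σ]
    have hdetYalt : ∑ σ : Equiv.Perm (Fin n),
        ((Equiv.Perm.sign σ : ℤ) : ℝ) * ∏ i, hpoly y (m₀ (σ i) + ((i : ℕ) : ℤ)) = detY m₀ := by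
      have hre : ∀ σ : Equiv.Perm (Fin n),
          ((Equiv.Perm.sign σ⁻¹ : ℤ) : ℝ) * ∏ i, hpoly y (m₀ (σ⁻¹ i) + ((i : ℕ) : ℤ))
          = ((Equiv.Perm.sign σ : ℤ) : ℝ) * ∏ i, hpoly y (m₀ i + ((σ i : ℕ) : ℤ)) := by
        intro σ
        rw [Equiv.Perm.sign_inv]
        congr 1
        rw [← Equiv.prod_comp σ (fun i => hpoly y (m₀ (σ⁻¹ i) + ((i : ℕ) : ℤ)))]
        refine Finset.prod_congr rfl fun i _ => ?_
        simp only [Equiv.Perm.inv_def, Equiv.symm_apply_apply]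
      calc ∑ σ : Equiv.Perm (Fin n),
              ((Equiv.Perm.sign σ : ℤ) : ℝ) * ∏ i, hpoly y (m₀ (σ i) + ((i : ℕ) : ℤ))
          = ∑ σ : Equiv.Perm (Fin n),
              ((Equiv.Perm.sign σ⁻¹ : ℤ) : ℝ) * ∏ i, hpoly y (m₀ (σ⁻¹ i) + ((i : ℕ) : ℤ)) :=
            (Equiv.sum_comp (Equiv.inv (Equiv.Perm (Fin n)))
              (fun σ : Equiv.Perm (Fin n) =>
                ((Equiv.Perm.sign σ : ℤ) : ℝ) * ∏ i, hpoly y (m₀ (σ i) + ((i : ℕ) : ℤ)))).symm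
        _ = ∑ σ : Equiv.Perm (Fin n),
              ((Equiv.Perm.sign σ : ℤ) : ℝ) * ∏ i, hpoly y (m₀ i + ((σ i : ℕ) : ℤ)) :=
            Finset.sum_congr rfl fun σ _ => hre σ
        _ = detY m₀ := by
            simp only [hdetYdef]
            rw [Matrix.det_apply]
            simp only [Units.smul_def, zsmul_eq_mul, Matrix.of_apply]
    calc ∑ σ : Equiv.Perm (Fin n), T (m₀ ∘ σ)
        = ∑ σ : Equiv.Perm (Fin n), ((Equiv.Perm.sign σ : ℤ) : ℝ) *
            ((∏ i, hpoly y (m₀ (σ i) + ((i : ℕ) : ℤ))) * detX m₀) := by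
          refine Finset.sum_congr rfl fun σ _ => ?_
          show (∏ i, hpoly y ((m₀ ∘ σ) i + ((i : ℕ) : ℤ))) * detX (m₀ ∘ σ) = _
          rw [hperm σ]
          simp only [Function.comp]
          ring
      _ = (∑ σ : Equiv.Perm (Fin n), ((Equiv.Perm.sign σ : ℤ) : ℝ) *
            ∏ i, hpoly y (m₀ (σ i) + ((i : ℕ) : ℤ))) * detX m₀ := by
          rw [Finset.sum_mul]
          exact Finset.sum_congr rfl fun σ _ => by ring
      _ = detY m₀ * detX m₀ := by rw [hdetYalt]
      _ = detX m₀ * detY m₀ := mul_comm _ _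
  -- the partition parametrization
  have hΨanti : ∀ lam : {f : Fin n → ℕ // Antitone f},
      StrictAnti (fun i : Fin n => ((lam.1 i : ℤ)) - ((i : ℕ) : ℤ)) :=
    fun lam => strictAnti_sub lam.2
  set Ψ : {f : Fin n → ℕ // Antitone f} → {f : Fin n → ℤ // StrictAnti f} :=
    fun lam => ⟨fun i => ((lam.1 i : ℤ)) - ((i : ℕ) : ℤ), hΨanti lam⟩ with hΨdef
  have hΨinj : Function.Injective Ψ := by
    intro a b hab
    apply Subtype.ext
    funext i
    have h1 := congrFun (congrArg Subtype.val hab) i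
    simp only [hΨdef, sub_left_inj, Nat.cast_inj] at h1
    exact h1
  have hU0 : ∀ m₀ : {f : Fin n → ℤ // StrictAnti f},
      (¬ ∀ i, 0 ≤ m₀.1 i + ((i : ℕ) : ℤ)) → detX m₀.1 = 0 := by
    rintro ⟨m₀, hm₀⟩ hcon
    push_neg at hcon
    obtain ⟨i₀, hi₀⟩ := hcon
    have hL : (⟨n - 1, by omega⟩ : Fin n) = (⟨n - 1, by omega⟩ : Fin n) := rfl
    set L : Fin n := ⟨n - 1, by omega⟩ with hLdef
    have hmono := antitone_aux hm₀
    have hle : i₀ ≤ L := by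
      rw [Fin.le_def]
      have := i₀.2
      simp only [hLdef]
      omega
    have hLneg : m₀ L + ((L : ℕ) : ℤ) < 0 := lt_of_le_of_lt (hmono hle) hi₀
    simp only [hdetXdef]
    rw [← Matrix.det_transpose]
    apply Matrix.det_eq_zero_of_row_eq_zero L
    intro j
    rw [Matrix.transpose_apply, Matrix.of_apply]
    apply hpoly_neg
    have hj : (j : ℕ) ≤ (L : ℕ) := by
      have := j.2
      simp only [hLdef]
      omega
    have hj' : ((j : ℕ) : ℤ) ≤ ((L : ℕ) : ℤ) := by exact_mod_cast hj
    omega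
  have hUsupp : Function.support (fun m₀ : {f : Fin n → ℤ // StrictAnti f} =>
      detX m₀.1 * detY m₀.1) ⊆ Set.range Ψ := by
    intro m₀ hm
    by_cases hall : ∀ i, 0 ≤ m₀.1 i + ((i : ℕ) : ℤ)
    · refine ⟨⟨fun i => (m₀.1 i + ((i : ℕ) : ℤ)).toNat, ?_⟩, ?_⟩
      · intro a b hab
        have h1 : m₀.1 b + ((b : ℕ) : ℤ) ≤ m₀.1 a + ((a : ℕ) : ℤ) := antitone_aux m₀.2 hab
        exact Int.toNat_le_toNat h1
      · apply Subtype.ext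
        funext i
        show (((m₀.1 i + ((i : ℕ) : ℤ)).toNat : ℤ)) - ((i : ℕ) : ℤ) = m₀.1 i
        rw [Int.toNat_of_nonneg (hall i)]
        ring
    · refine absurd ?_ hm
      show detX m₀.1 * detY m₀.1 = 0
      rw [hU0 m₀ hall, zero_mul]
  -- assembling
  have hTΦsum : Summable (fun z : {f : Fin n → ℤ // StrictAnti f} × Equiv.Perm (Fin n)
      => T (z.1.1 ∘ z.2)) := hTsum.comp_injective hΦinj
  have hUeq : ∀ m₀ : {f : Fin n → ℤ // StrictAnti f},
      (∑' σ : Equiv.Perm (Fin n), T (m₀.1 ∘ σ)) = detX m₀.1 * detY m₀.1 := by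
    intro m₀
    rw [tsum_fintype]
    exact hInner m₀.1
  have hUsum : Summable (fun m₀ : {f : Fin n → ℤ // StrictAnti f} =>
      detX m₀.1 * detY m₀.1) := hTΦsum.prod.congr fun m₀ => hUeq m₀
  have hSX : ∀ lam : {f : Fin n → ℕ // Antitone f}, detX (Ψ lam).1 = schur lam.1 x := by
    intro lam
    simp only [hΨdef, hdetXdef]
    rw [schur, ← Matrix.det_transpose]
    congr 1
  have hSY : ∀ lam : {f : Fin n → ℕ // Antitone f}, detY (Ψ lam).1 = schur lam.1 y := by
    intro lam
    simp only [hΨdef, hdetYdef]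
    rw [schur, ← Matrix.det_transpose]
    congr 1
  have hfinal_sum : Summable (fun lam : {f : Fin n → ℕ // Antitone f} =>
      schur lam.1 x * schur lam.1 y) := by
    refine (hUsum.comp_injective hΨinj).congr fun lam => ?_
    show detX (Ψ lam).1 * detY (Ψ lam).1 = _
    rw [hSX lam, hSY lam]
  refine ⟨hfinal_sum, ?_⟩
  have hRHS : (Matrix.of fun i j : Fin n =>
        ∑' ℓ : ℕ, hpoly x ((ℓ : ℤ) + (((i : ℕ) : ℤ) - ((j : ℕ) : ℤ))) * hpoly y (ℓ : ℤ))
      = (Matrix.of fun i j : Fin n =>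
        ∑' m : ℤ, hpoly x (m + ((i : ℕ) : ℤ)) * hpoly y (m + ((j : ℕ) : ℤ))) := by
    ext i j
    exact hEntry i j
  rw [hRHS, hmain1]
  calc ∑' lam : {f : Fin n → ℕ // Antitone f}, schur lam.1 x * schur lam.1 y
      = ∑' lam : {f : Fin n → ℕ // Antitone f}, detX (Ψ lam).1 * detY (Ψ lam).1 :=
        tsum_congr fun lam => by rw [hSX lam, hSY lam]
    _ = ∑' m₀ : {f : Fin n → ℤ // StrictAnti f}, detX m₀.1 * detY m₀.1 :=
        hΨinj.tsum_eq hUsupp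
    _ = ∑' m₀ : {f : Fin n → ℤ // StrictAnti f}, ∑' σ : Equiv.Perm (Fin n), T (m₀.1 ∘ σ) :=
        tsum_congr fun m₀ => (hUeq m₀).symm
    _ = ∑' z : {f : Fin n → ℤ // StrictAnti f} × Equiv.Perm (Fin n), T (z.1.1 ∘ z.2) :=
        (Summable.tsum_prod' hTΦsum hTΦsum.prod_factor).symm
    _ = ∑' m : Fin n → ℤ, T m := hΦinj.tsum_eq hTsupp
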